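/- Let X be a chi-squared random variable with ν ≥ 1 degrees of freedom. For any ζ > 0, P(X/ν ≥ 1 + ζ) ≤ exp((ν/2)(log(1+ζ) − ζ)). -/

import Mathlib

open ProbabilityTheory

open MeasureTheory Real Set ENNReal in
theorem stmt_9 (ν : ℕ) (hν : 1 ≤ ν) (ζ : ℝ) (hζ : 0 < ζ) :
    gammaMeasure ((ν : ℝ) / 2) (1 / 2) {x | 1 + ζ ≤ x / (ν : ℝ)}
    ≤ ENNReal.ofReal (Real.exp (((ν : ℝ) / 2) * (Real.log (1 + ζ) - ζ))) := by
  have hν0 : (0 : ℝ) < (ν : ℝ) := by exact_mod_cast Nat.lt_of_lt_of_le Nat.zero_lt_one hν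
  set a : ℝ := (ν : ℝ) / 2 with ha_def
  have ha : 0 < a := by positivity
  have h1ζ : (0 : ℝ) < 1 + ζ := by linarith
  set t : ℝ := ζ / (2 * (1 + ζ)) with ht_def
  set s : ℝ := 1 / (2 * (1 + ζ)) with hs_def
  have hs : 0 < s := by positivity
  have ht : 0 < t := by positivity
  set c : ℝ := (ν : ℝ) * (1 + ζ) with hc_def
  have hc : 0 < c := by positivity
  have hst : s + t = 1 / 2 := by
    rw [hs_def, ht_def, ← add_div]
    rw [div_eq_div_iff (by positivity) (by norm_num)]
    ring
  -- the set is Ici c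
  have hset : {x : ℝ | 1 + ζ ≤ x / (ν : ℝ)} = Ici c := by
    ext x
    simp only [mem_setOf_eq, mem_Ici, hc_def]
    rw [le_div_iff₀ hν0]
    constructor <;> intro h <;> nlinarith
  rw [hset, gammaMeasure, withDensity_apply _ measurableSet_Ici]
  -- pointwise bound on Ici c
  have key : ∀ x : ℝ, x ∈ Ici c →
      gammaPDF a (1/2) x ≤ ENNReal.ofReal (exp (t * (x - c))) * gammaPDF a (1/2) x := by
    intro x hx
    have h1 : (1 : ℝ≥0∞) ≤ ENNReal.ofReal (exp (t * (x - c))) := by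
      rw [show (1 : ℝ≥0∞) = ENNReal.ofReal (exp 0) by simp]
      exact ENNReal.ofReal_le_ofReal (exp_le_exp.2 (by nlinarith [mem_Ici.1 hx]))
    calc gammaPDF a (1/2) x = 1 * gammaPDF a (1/2) x := (one_mul _).symm
      _ ≤ _ := mul_le_mul_left h1 _
  -- pointwise identity for all x
  have hid : ∀ x : ℝ, ENNReal.ofReal (exp (t * (x - c))) * gammaPDF a (1/2) x
      = ENNReal.ofReal (exp (-(t*c)) * ((1/2) / s) ^ a) * gammaPDF a s x := by
    intro x
    rcases lt_or_ge x 0 with hx | hx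
    · rw [gammaPDF_of_neg hx, gammaPDF_of_neg hx, mul_zero, mul_zero]
    · rw [gammaPDF_of_nonneg hx, gammaPDF_of_nonneg hx,
        ← ENNReal.ofReal_mul (exp_nonneg _), ← ENNReal.ofReal_mul (by positivity)]
      congr 1
      have hpow : ((1/2) / s) ^ a * s ^ a = ((1/2 : ℝ)) ^ a := by
        rw [← Real.mul_rpow (by positivity) hs.le, div_mul_cancel₀]
        exact hs.ne'
      have hexp : exp (t * (x - c)) * exp (-(1/2 * x)) = exp (-(t*c)) * exp (-(s * x)) := by
        rw [← exp_add, ← exp_add]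
        congr 1
        have : (1:ℝ)/2 = s + t := hst.symm
        rw [this]; ring
      calc exp (t * (x - c)) * ((1/2) ^ a / Gamma a * x ^ (a - 1) * exp (-(1/2 * x)))
          = ((1/2) ^ a / Gamma a * x ^ (a - 1)) * (exp (t * (x - c)) * exp (-(1/2 * x))) := by ring
        _ = ((1/2) ^ a / Gamma a * x ^ (a - 1)) * (exp (-(t*c)) * exp (-(s * x))) := by rw [hexp]
        _ = exp (-(t*c)) * ((1/2) / s) ^ a * (s ^ a / Gamma a * x ^ (a - 1) * exp (-(s * x))) := by
            rw [← hpow]; ring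
  calc ∫⁻ x in Ici c, gammaPDF a (1/2) x
      ≤ ∫⁻ x in Ici c, ENNReal.ofReal (exp (t * (x - c))) * gammaPDF a (1/2) x :=
        setLIntegral_mono (Measurable.mul (measurable_exp.comp ((measurable_id.sub_const c).const_mul t)).ennreal_ofReal (measurable_gammaPDFReal a (1/2)).ennreal_ofReal) key
    _ ≤ ∫⁻ x, ENNReal.ofReal (exp (t * (x - c))) * gammaPDF a (1/2) x :=
        setLIntegral_le_lintegral _ _
    _ = ∫⁻ x, ENNReal.ofReal (exp (-(t*c)) * ((1/2) / s) ^ a) * gammaPDF a s x := by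
        exact lintegral_congr hid
    _ = ENNReal.ofReal (exp (-(t*c)) * ((1/2) / s) ^ a) * ∫⁻ x, gammaPDF a s x := by
        rw [lintegral_const_mul]
        exact measurable_gammaPDFReal a s |>.ennreal_ofReal
    _ = ENNReal.ofReal (exp (-(t*c)) * ((1/2) / s) ^ a) := by
        rw [lintegral_gammaPDF_eq_one ha hs, mul_one]
    _ = ENNReal.ofReal (exp (a * (Real.log (1 + ζ) - ζ))) := by
        congr 1
        have htc : t * c = (ν : ℝ) * ζ / 2 := by
          rw [ht_def, hc_def]
          field_simp
        have hq : (1/2 : ℝ) / s = 1 + ζ := by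
          rw [hs_def]; field_simp
        rw [hq, htc, mul_sub, Real.exp_sub, ← Real.exp_log (x := (1+ζ) ^ a) (by positivity),
          Real.log_rpow h1ζ, ← Real.exp_sub]
        rw [← Real.exp_add]
        ring_nf
        rw [ha_def]; ring_nf
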